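/- arXiv:2008.12600 — 2 statements merged into one kernel-verified Lean document; each statement's English description precedes it below -/
import Mathlib

section
/- For every x ∈ (0,1), the sum of SL(2,ℝ) blocks over even spins ℓ ≥ 2 with unit coefficient function evaluates in closed form: ∑_{ℓ = 2,4,6,…} (Γ(ℓ+1)²/Γ(2ℓ+1)) · 2 · k_{ℓ+1}(x) = 1/(1−x) + x − 1 + 2·log(1−x). -/
open Real

/-- Pochhammer symbol `(a)_n = a (a+1) ⋯ (a+n-1)`. -/
noncomputable def poch (a : ℝ) (n : ℕ) : ℝ := (ascPochhammer ℝ n).eval a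

/-- Gauss hypergeometric series `₂F₁(a,b;c;x)`. -/
noncomputable def F21 (a b c x : ℝ) : ℝ :=
  ∑' n : ℕ, poch a n * poch b n / (poch c n * (n.factorial : ℝ)) * x ^ n

/-- The SL(2,ℝ) collinear conformal block `k_β(x) = x^β ₂F₁(β,β;2β;x)`. -/
noncomputable def kblock (β x : ℝ) : ℝ := x ^ β * F21 β β (2 * β) x


lemma poch_succ (y : ℝ) (b : ℕ) : poch y (b+1) = poch y b * (y + b) := by
  simp [poch, ascPochhammer_succ_right]

lemma poch_nat (a b : ℕ) : poch ((a:ℝ)+1) b = ((a+b).factorial : ℝ) / (a.factorial : ℝ) := by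
  induction b with
  | zero =>
    simp only [poch, ascPochhammer_zero, Polynomial.eval_one, Nat.add_zero]
    rw [div_self (by exact_mod_cast (Nat.factorial_ne_zero a))]
  | succ b ih =>
    rw [poch_succ, ih, show a+(b+1) = (a+b)+1 from rfl, Nat.factorial_succ]
    push_cast
    field_simp
    ring

lemma fact_ineq (L k : ℕ) :
    (2*L+1) * ((L+k).factorial * (L+k).factorial) ≤ (2*L+1+k).factorial * k.factorial := by
  have c1 : (L+k).choose L * (L.factorial * k.factorial) = (L+k).factorial := by
    have h := Nat.choose_mul_factorial_mul_factorial (show L ≤ L+k by omega)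
    simp only [Nat.add_sub_cancel_left] at h
    rw [← h]; ring
  have c2 : (2*L+k).choose L * (L.factorial * (L+k).factorial) = (2*L+k).factorial := by
    have h := Nat.choose_mul_factorial_mul_factorial (show L ≤ 2*L+k by omega)
    rw [show 2*L+k-L = L+k by omega] at h
    rw [← h]; ring
  have h1 : (L+k).factorial * (L+k).factorial ≤ (2*L+k).factorial * k.factorial := by
    calc (L+k).factorial * (L+k).factorial
        = (L+k).choose L * (L.factorial * k.factorial) * (L+k).factorial := by rw [c1]
      _ ≤ (2*L+k).choose L * (L.factorial * k.factorial) * (L+k).factorial := by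
          have := Nat.choose_le_choose L (show L+k ≤ 2*L+k by omega)
          exact Nat.mul_le_mul_right _ (Nat.mul_le_mul_right _ this)
      _ = (2*L+k).choose L * (L.factorial * (L+k).factorial) * k.factorial := by ring
      _ = (2*L+k).factorial * k.factorial := by rw [c2]
  have h2 : (2*L+1) * (2*L+k).factorial ≤ (2*L+1+k).factorial := by
    clear c1 c2 h1
    induction k with
    | zero => simp [Nat.factorial_succ]
    | succ k ih =>
      calc (2*L+1)*(2*L+(k+1)).factorial = (2*L+k+1) * ((2*L+1) * (2*L+k).factorial) := by
            rw [show 2*L+(k+1) = (2*L+k)+1 from rfl, Nat.factorial_succ]; ring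
        _ ≤ (2*L+k+1) * (2*L+1+k).factorial := Nat.mul_le_mul_left _ ih
        _ ≤ (2*L+1+k+1) * (2*L+1+k).factorial := Nat.mul_le_mul_right _ (by omega)
        _ = (2*L+1+(k+1)).factorial := by
            rw [show 2*L+1+(k+1) = (2*L+1+k)+1 from rfl, Nat.factorial_succ]
  calc (2*L+1) * ((L+k).factorial * (L+k).factorial)
      ≤ (2*L+1) * ((2*L+k).factorial * k.factorial) := Nat.mul_le_mul_left _ h1
    _ = ((2*L+1) * (2*L+k).factorial) * k.factorial := by ring
    _ ≤ (2*L+1+k).factorial * k.factorial := Nat.mul_le_mul_right _ h2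

noncomputable def fcoef (n k : ℕ) : ℝ :=
  2*(4*(n:ℝ)+5) * ((2*n+2+k).factorial:ℝ)^2 / (((4*n+5+k).factorial:ℝ) * (k.factorial:ℝ))

lemma fcoef_nonneg (n k : ℕ) : 0 ≤ fcoef n k := by unfold fcoef; positivity

lemma fcoef_le (n k : ℕ) : fcoef n k ≤ 2 := by
  unfold fcoef
  rw [div_le_iff₀ (by positivity)]
  have h : ((4*n+5) * ((2*n+2+k).factorial * (2*n+2+k).factorial) : ℕ)
      ≤ (4*n+5+k).factorial * k.factorial := by
    have h0 := fact_ineq (2*n+2) k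
    calc (4*n+5) * ((2*n+2+k).factorial * (2*n+2+k).factorial)
        = (2*(2*n+2)+1) * ((2*n+2+k).factorial * (2*n+2+k).factorial) := by ring_nf
      _ ≤ (2*(2*n+2)+1+k).factorial * k.factorial := h0
      _ = (4*n+5+k).factorial * k.factorial := by ring_nf
  have hr : (4*(n:ℝ)+5) * (((2*n+2+k).factorial:ℝ) * ((2*n+2+k).factorial:ℝ))
      ≤ ((4*n+5+k).factorial:ℝ) * (k.factorial:ℝ) := by exact_mod_cast h
  nlinarith [hr]



lemma summable_fterm {x : ℝ} (hx0 : 0 < x) (hx1 : x < 1) :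
    Summable (fun p : ℕ×ℕ => fcoef p.1 p.2 * x^(2*p.1+3+p.2)) := by
  have hg : Summable (fun p : ℕ×ℕ => (2*x^3*(x^2)^p.1) * x^p.2) :=
    Summable.mul_of_nonneg
      ((summable_geometric_of_lt_one (by positivity) (by nlinarith)).mul_left (2*x^3))
      (summable_geometric_of_lt_one hx0.le hx1)
      (fun n => by positivity) (fun k => by positivity)
  apply Summable.of_nonneg_of_le (fun p => mul_nonneg (fcoef_nonneg _ _) (by positivity)) _ hg
  intro p
  have hxp : x^(2*p.1+3+p.2) = x^3*(x^2)^p.1 * x^p.2 := by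
    rw [← pow_mul, ← pow_add, ← pow_add]; congr 1; ring
  calc fcoef p.1 p.2 * x^(2*p.1+3+p.2) ≤ 2 * x^(2*p.1+3+p.2) :=
        mul_le_mul_of_nonneg_right (fcoef_le _ _) (by positivity)
    _ = (2*x^3*(x^2)^p.1) * x^p.2 := by rw [hxp]; ring

lemma term_eq {x : ℝ} (hx0 : 0 < x) (n : ℕ) :
    (Real.Gamma ((2*(n:ℝ)+2)+1))^2 / Real.Gamma (2*(2*(n:ℝ)+2)+1) * (2 * kblock ((2*(n:ℝ)+2)+1) x)
    = ∑' k, fcoef n k * x^(2*n+3+k) := by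
  have hg1 : Real.Gamma ((2*(n:ℝ)+2)+1) = ((2*n+2).factorial : ℝ) := by
    rw [show (2*(n:ℝ)+2) = ((2*n+2 : ℕ):ℝ) by push_cast; ring, Real.Gamma_nat_eq_factorial]
  have hg2 : Real.Gamma (2*(2*(n:ℝ)+2)+1) = ((4*n+4).factorial : ℝ) := by
    rw [show 2*(2*(n:ℝ)+2) = ((4*n+4 : ℕ):ℝ) by push_cast; ring, Real.Gamma_nat_eq_factorial]
  have hxpow : x ^ ((2*(n:ℝ)+2)+1) = x ^ (2*n+3 : ℕ) := by
    rw [show (2*(n:ℝ)+2)+1 = ((2*n+3 : ℕ):ℝ) by push_cast; ring, Real.rpow_natCast]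
  have hp1 : ∀ k, poch ((2*(n:ℝ)+2)+1) k = ((2*n+2+k).factorial : ℝ)/((2*n+2).factorial : ℝ) := by
    intro k
    rw [show (2*(n:ℝ)+2)+1 = ((2*n+2:ℕ):ℝ)+1 by push_cast; ring, poch_nat]
  have hp2 : ∀ k, poch (2*((2*(n:ℝ)+2)+1)) k = ((4*n+5+k).factorial : ℝ)/((4*n+5).factorial : ℝ) := by
    intro k
    rw [show 2*((2*(n:ℝ)+2)+1) = ((4*n+5:ℕ):ℝ)+1 by push_cast; ring, poch_nat]
  have key : ∀ k : ℕ, fcoef n k * x^(2*n+3+k)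
      = (((2*n+2).factorial:ℝ)^2/((4*n+4).factorial) * (2 * x^(2*n+3:ℕ)))
        * (poch ((2*(n:ℝ)+2)+1) k * poch ((2*(n:ℝ)+2)+1) k /
            (poch (2*((2*(n:ℝ)+2)+1)) k * (k.factorial : ℝ)) * x^k) := by
    intro k
    rw [hp1, hp2]
    unfold fcoef
    have e5 : ((4*n+5).factorial : ℝ) = (4*(n:ℝ)+5) * ((4*n+4).factorial : ℝ) := by
      rw [show 4*n+5 = (4*n+4)+1 from rfl, Nat.factorial_succ]; push_cast; ring
    have hxp : x^(2*n+3+k) = x^(2*n+3) * x^k := pow_add x (2*n+3) k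
    rw [e5, hxp]
    have n1 : ((2*n+2).factorial : ℝ) ≠ 0 := by exact_mod_cast (2*n+2).factorial_ne_zero
    have n2 : ((4*n+4).factorial : ℝ) ≠ 0 := by exact_mod_cast (4*n+4).factorial_ne_zero
    have n3 : ((4*n+5+k).factorial : ℝ) ≠ 0 := by exact_mod_cast (4*n+5+k).factorial_ne_zero
    have n4 : ((k).factorial : ℝ) ≠ 0 := by exact_mod_cast (k).factorial_ne_zero
    have n5 : (4*(n:ℝ)+5) ≠ 0 := by positivity
    field_simp
  rw [tsum_congr key, tsum_mul_left]
  unfold kblock F21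
  rw [hg1, hg2, hxpow]
  ring


noncomputable def Gfun (x : ℝ) (m j : ℕ) : ℝ :=
  if 2*j+3 ≤ m then
    ((m-1).factorial:ℝ)^2 * x^m / (((m:ℝ)-1) * ((m+2*j).factorial:ℝ) * ((m-(2*j+3)).factorial:ℝ))
  else 0

instance fiberFintype (m : ℕ) : Fintype {n : ℕ // 2*n+3 ≤ m} :=
  Fintype.subtype ((Finset.range m).filter fun n => 2*n+3 ≤ m) (by
    intro n
    simp only [Finset.mem_filter, Finset.mem_range]
    omega)

def espin : ℕ × ℕ ≃ Σ m : ℕ, {n : ℕ // 2*n+3 ≤ m} where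
  toFun p := ⟨2*p.1+3+p.2, ⟨p.1, by omega⟩⟩
  invFun q := (q.2.1, q.1 - (2*q.2.1+3))
  left_inv p := by
    obtain ⟨n, k⟩ := p
    have h : 2*n+3+k - (2*n+3) = k := by omega
    simp [h]
  right_inv q := by
    obtain ⟨m, n, h⟩ := q
    have hm : 2*n+3+(m-(2*n+3)) = m := by omega
    exact Sigma.subtype_ext hm rfl

noncomputable def acoef (m : ℕ) : ℝ := if 3 ≤ m then ((m:ℝ)-2)/m else 0

lemma gstep {x : ℝ} (m n : ℕ) :
    (if 2*n+3 ≤ m then fcoef n (m-(2*n+3)) * x^(2*n+3+(m-(2*n+3))) else 0)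
      = Gfun x m n - Gfun x m (n+1) := by
  by_cases h : 2*n+3 ≤ m
  · obtain ⟨b, rfl⟩ : ∃ b, m = 2*n+3+b := ⟨m - (2*n+3), by omega⟩
    rw [if_pos h]
    unfold Gfun fcoef
    match b with
    | 0 =>
      rw [if_pos h, if_neg (by omega)]
      simp only [show 2*n+3+0 - (2*n+3) = 0 from by omega,
        show 2*n+3+0 - 1 = 2*n+2 from by omega,
        show 2*n+3+0+2*n = 4*n+3 from by omega,
        show 2*n+3+0 - (2*0+3) = 2*n from by omega,
        show 2*n+2+0 = 2*n+2 from by omega,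
        show 4*n+5+0 = 4*n+5 from by omega,
        show 2*n+3+0 = 2*n+3 from by omega, Nat.factorial_zero]
      have e1 : ((4*n+5).factorial:ℝ) = (4*(n:ℝ)+5)*(4*(n:ℝ)+4)*((4*n+3).factorial:ℝ) := by
        rw [show 4*n+5 = (4*n+4)+1 from rfl, Nat.factorial_succ,
            show 4*n+4 = (4*n+3)+1 from rfl, Nat.factorial_succ]
        push_cast; ring
      have hc : ((2*n+3:ℕ):ℝ) - 1 = 2*(n:ℝ)+2 := by push_cast; ring
      rw [e1, hc]
      have n1 : ((2*n+2).factorial:ℝ) ≠ 0 := by exact_mod_cast (2*n+2).factorial_ne_zero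
      have n2 : ((4*n+3).factorial:ℝ) ≠ 0 := by exact_mod_cast (4*n+3).factorial_ne_zero
      have n3 : (2*(n:ℝ)+2) ≠ 0 := by positivity
      have n4 : (4*(n:ℝ)+5) ≠ 0 := by positivity
      have n5 : (4*(n:ℝ)+4) ≠ 0 := by positivity
      field_simp
      ring
    | 1 =>
      rw [if_pos h, if_neg (by omega)]
      simp only [show 2*n+3+1 - (2*n+3) = 1 from by omega,
        show 2*n+3+1 - 1 = 2*n+3 from by omega,
        show 2*n+3+1+2*n = 4*n+4 from by omega,
        show 2*n+2+1 = 2*n+3 from by omega,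
        show 4*n+5+1 = 4*n+6 from by omega,
        show 2*n+3+1 = 2*n+4 from by omega, Nat.factorial_one]
      have e1 : ((4*n+6).factorial:ℝ) = (4*(n:ℝ)+6)*(4*(n:ℝ)+5)*((4*n+4).factorial:ℝ) := by
        rw [show 4*n+6 = (4*n+5)+1 from rfl, Nat.factorial_succ,
            show 4*n+5 = (4*n+4)+1 from rfl, Nat.factorial_succ]
        push_cast; ring
      have hc : ((2*n+4:ℕ):ℝ) - 1 = 2*(n:ℝ)+3 := by push_cast; ring
      rw [e1, hc]
      have n1 : ((2*n+3).factorial:ℝ) ≠ 0 := by exact_mod_cast (2*n+3).factorial_ne_zero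
      have n2 : ((4*n+4).factorial:ℝ) ≠ 0 := by exact_mod_cast (4*n+4).factorial_ne_zero
      have n3 : (2*(n:ℝ)+3) ≠ 0 := by positivity
      have n4 : (4*(n:ℝ)+5) ≠ 0 := by positivity
      have n5 : (4*(n:ℝ)+6) ≠ 0 := by positivity
      field_simp
      ring
    | (c+2) =>
      rw [if_pos h, if_pos (by omega)]
      simp only [show 2*n+3+(c+2) - (2*n+3) = c+2 from by omega,
        show 2*n+3+(c+2) - 1 = 2*n+4+c from by omega,
        show 2*n+3+(c+2)+2*n = 4*n+5+c from by omega,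
        show 2*n+3+(c+2)+2*(n+1) = 4*n+7+c from by omega,
        show 2*n+3+(c+2) - (2*(n+1)+3) = c from by omega,
        show 2*n+2+(c+2) = 2*n+4+c from by omega,
        show 4*n+5+(c+2) = 4*n+7+c from by omega]
      simp only [show 2*n+3+(c+2) = 2*n+5+c from by omega]
      have e1 : ((4*n+7+c).factorial:ℝ)
          = (4*(n:ℝ)+7+c)*(4*(n:ℝ)+6+c)*((4*n+5+c).factorial:ℝ) := by
        rw [show 4*n+7+c = (4*n+6+c)+1 from by omega, Nat.factorial_succ,
            show 4*n+6+c = (4*n+5+c)+1 from by omega, Nat.factorial_succ]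
        push_cast; ring
      have e2 : ((c+2).factorial:ℝ) = ((c:ℝ)+2)*((c:ℝ)+1)*(c.factorial:ℝ) := by
        rw [show c+2 = (c+1)+1 from rfl, Nat.factorial_succ, Nat.factorial_succ]
        push_cast; ring
      have hc : ((2*n+5+c:ℕ):ℝ) - 1 = 2*(n:ℝ)+4+c := by push_cast; ring
      rw [e1, e2, hc]
      have n1 : ((2*n+4+c).factorial:ℝ) ≠ 0 := by exact_mod_cast (2*n+4+c).factorial_ne_zero
      have n2 : ((4*n+5+c).factorial:ℝ) ≠ 0 := by exact_mod_cast (4*n+5+c).factorial_ne_zero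
      have n3 : ((c).factorial:ℝ) ≠ 0 := by exact_mod_cast (c).factorial_ne_zero
      have n4 : (2*(n:ℝ)+4+(c:ℝ)) ≠ 0 := by positivity
      have n5 : (4*(n:ℝ)+7+(c:ℝ)) ≠ 0 := by positivity
      have n6 : (4*(n:ℝ)+6+(c:ℝ)) ≠ 0 := by positivity
      have n7 : ((c:ℝ)+2) ≠ 0 := by positivity
      have n8 : ((c:ℝ)+1) ≠ 0 := by positivity
      field_simp
      ring
  · rw [if_neg h]
    unfold Gfun
    rw [if_neg h, if_neg (by omega)]
    ring

lemma fiber_sum {x : ℝ} (m : ℕ) :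
    ∑' (i : {n : ℕ // 2*n+3 ≤ m}), fcoef i.1 (m - (2*i.1+3)) * x^(2*i.1+3+(m - (2*i.1+3)))
    = acoef m * x^m := by
  classical
  calc ∑' (i : {n : ℕ // 2*n+3 ≤ m}), fcoef i.1 (m - (2*i.1+3)) * x^(2*i.1+3+(m - (2*i.1+3)))
      = ∑ i : {n : ℕ // 2*n+3 ≤ m}, fcoef i.1 (m - (2*i.1+3)) * x^(2*i.1+3+(m - (2*i.1+3))) :=
        tsum_fintype _
    _ = ∑ n ∈ (Finset.range m).filter (fun n => 2*n+3 ≤ m),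
          fcoef n (m - (2*n+3)) * x^(2*n+3+(m - (2*n+3))) := by
        rw [Finset.sum_subtype (p := fun n => 2*n+3 ≤ m)
          ((Finset.range m).filter fun n => 2*n+3 ≤ m)
          (by intro n; simp only [Finset.mem_filter, Finset.mem_range]; omega)
          (fun n => fcoef n (m - (2*n+3)) * x^(2*n+3+(m - (2*n+3))))]
    _ = ∑ n ∈ Finset.range m,
          (if 2*n+3 ≤ m then fcoef n (m-(2*n+3)) * x^(2*n+3+(m-(2*n+3))) else 0) :=
        Finset.sum_filter _ _
    _ = ∑ n ∈ Finset.range m, (Gfun x m n - Gfun x m (n+1)) :=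
        Finset.sum_congr rfl (fun n _ => gstep m n)
    _ = Gfun x m 0 - Gfun x m m := Finset.sum_range_sub' (Gfun x m) m
    _ = acoef m * x^m := by
        have hGm : Gfun x m m = 0 := by unfold Gfun; exact if_neg (by omega)
        rw [hGm, sub_zero]
        unfold Gfun acoef
        by_cases h3 : 3 ≤ m
        · rw [if_pos (by omega : 2*0+3 ≤ m), if_pos h3]
          obtain ⟨M, rfl⟩ : ∃ M, m = M+3 := ⟨m-3, by omega⟩
          simp only [show M+3-1 = M+2 from by omega, show M+3+2*0 = M+3 from by omega,
            show M+3-(2*0+3) = M from by omega]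
          have e1 : ((M+3).factorial:ℝ) = ((M:ℝ)+3)*((M:ℝ)+2)*((M:ℝ)+1)*(M.factorial:ℝ) := by
            rw [show M+3 = (M+2)+1 from rfl, Nat.factorial_succ,
                show M+2 = (M+1)+1 from rfl, Nat.factorial_succ, Nat.factorial_succ]
            push_cast; ring
          have e2 : ((M+2).factorial:ℝ) = ((M:ℝ)+2)*((M:ℝ)+1)*(M.factorial:ℝ) := by
            rw [show M+2 = (M+1)+1 from rfl, Nat.factorial_succ, Nat.factorial_succ]
            push_cast; ring
          have hc : ((M+3:ℕ):ℝ) - 1 = (M:ℝ)+2 := by push_cast; ring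
          have hc2 : ((M+3:ℕ):ℝ) - 2 = (M:ℝ)+1 := by push_cast; ring
          have hc3 : ((M+3:ℕ):ℝ) = (M:ℝ)+3 := by push_cast; ring
          rw [e1, e2, hc, hc2, hc3]
          have n1 : (M.factorial:ℝ) ≠ 0 := by exact_mod_cast M.factorial_ne_zero
          have n2 : ((M:ℝ)+1) ≠ 0 := by positivity
          have n3 : ((M:ℝ)+2) ≠ 0 := by positivity
          have n4 : ((M:ℝ)+3) ≠ 0 := by positivity
          field_simp
        · rw [if_neg (by omega), if_neg h3, zero_mul]


lemma rhs_hasSum {x : ℝ} (hx0 : 0 < x) (hx1 : x < 1) :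
    HasSum (fun m : ℕ => acoef m * x^m) (1 / (1 - x) + x - 1 + 2 * Real.log (1 - x)) := by
  classical
  rw [one_div]
  have h1 : HasSum (fun m : ℕ => x^m) (1-x)⁻¹ := hasSum_geometric_of_lt_one hx0.le hx1
  have hlog : HasSum (fun k : ℕ => x^(k+1)/(k+1)) (-Real.log (1-x)) :=
    hasSum_pow_div_log_of_abs_lt_one (by rw [abs_of_pos hx0]; exact hx1)
  set E : ℕ → ℝ := fun m => 2*x^m/(m:ℝ) with hEdef
  have hE1 : HasSum (fun k : ℕ => E (k+1)) (2*(-Real.log (1-x))) := by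
    have h := hlog.mul_left 2
    have : (fun k : ℕ => E (k+1)) = fun k : ℕ => 2*(x^(k+1)/((k:ℝ)+1)) := by
      funext k; rw [hEdef]; push_cast; ring
    rw [this]; exact h
  have hE : HasSum E (2*(-Real.log (1-x))) := by
    have h := (hasSum_nat_add_iff (f := E) 1).1 hE1
    simpa [hEdef] using h
  have hD : HasSum (fun m : ℕ => x^m - E m) ((1-x)⁻¹ - 2*(-Real.log (1-x))) := h1.sub hE
  have hD0 := hD.update 0 0
  have hD1 := hD0.update 1 0
  have hfun : Function.update (Function.update (fun m : ℕ => x^m - E m) 0 0) 1 0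
      = fun m : ℕ => acoef m * x^m := by
    funext m
    match m with
    | 0 =>
      rw [Function.update_of_ne (show (0:ℕ) ≠ 1 by norm_num), Function.update_self]
      simp [acoef]
    | 1 => rw [Function.update_self]; simp [acoef]
    | 2 =>
      rw [Function.update_of_ne (show (2:ℕ) ≠ 1 by norm_num),
          Function.update_of_ne (show (2:ℕ) ≠ 0 by norm_num)]
      simp only [acoef, hEdef]
      norm_num
    | (M+3) =>
      rw [Function.update_of_ne (show M+3 ≠ 1 by omega),
          Function.update_of_ne (show M+3 ≠ 0 by omega)]
      simp only [acoef, hEdef]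
      rw [if_pos (by omega : 3 ≤ M+3)]
      have hc : ((M+3:ℕ):ℝ) = (M:ℝ)+3 := by push_cast; ring
      rw [hc]
      have n4 : ((M:ℝ)+3) ≠ 0 := by positivity
      field_simp
  rw [hfun] at hD1
  refine (congrArg (HasSum (fun m : ℕ => acoef m * x^m)) ?_).mpr hD1
  simp only [Function.update_self, Function.update_of_ne (show (1:ℕ) ≠ 0 by norm_num), hEdef]
  norm_num
  ring

set_option maxHeartbeats 2000000 in
/-- for x ∈ (0,1), summing SL(2,ℝ) blocks over even spins
ℓ = 2,4,6,… (here ℓ = 2(n+1)) with unit coefficient function gives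
`∑ (Γ(ℓ+1)²/Γ(2ℓ+1))·2·k_{ℓ+1}(x) = 1/(1−x) + x − 1 + 2 log(1−x)`. -/
theorem sum_blocks_unit (x : ℝ) (hx : x ∈ Set.Ioo (0 : ℝ) 1) :
    ∑' n : ℕ,
        (Real.Gamma ((2 * (n : ℝ) + 2) + 1)) ^ 2 / Real.Gamma (2 * (2 * (n : ℝ) + 2) + 1)
          * (2 * kblock ((2 * (n : ℝ) + 2) + 1) x)
      = 1 / (1 - x) + x - 1 + 2 * Real.log (1 - x) := by
  obtain ⟨hx0, hx1⟩ := hx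
  have hsum : Summable (fun p : ℕ×ℕ => fcoef p.1 p.2 * x^(2*p.1+3+p.2)) :=
    summable_fterm hx0 hx1
  calc ∑' n : ℕ,
        (Real.Gamma ((2 * (n : ℝ) + 2) + 1)) ^ 2 / Real.Gamma (2 * (2 * (n : ℝ) + 2) + 1)
          * (2 * kblock ((2 * (n : ℝ) + 2) + 1) x)
      = ∑' n : ℕ, ∑' k : ℕ, fcoef n k * x^(2*n+3+k) := tsum_congr (term_eq hx0)
    _ = ∑' p : ℕ×ℕ, fcoef p.1 p.2 * x^(2*p.1+3+p.2) :=
        (Summable.tsum_prod' hsum (fun n => hsum.prod_factor n)).symm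
    _ = ∑' q : (Σ m : ℕ, {n : ℕ // 2*n+3 ≤ m}),
          fcoef (espin.symm q).1 (espin.symm q).2 * x^(2*(espin.symm q).1+3+(espin.symm q).2) :=
        (Equiv.tsum_eq espin.symm _).symm
    _ = ∑' m : ℕ, ∑' (i : {n : ℕ // 2*n+3 ≤ m}),
          fcoef (espin.symm ⟨m, i⟩).1 (espin.symm ⟨m, i⟩).2
            * x^(2*(espin.symm ⟨m, i⟩).1+3+(espin.symm ⟨m, i⟩).2) :=
        Summable.tsum_sigma' (fun m => Summable.of_finite)
          ((Equiv.summable_iff espin.symm).2 hsum)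
    _ = ∑' m : ℕ, acoef m * x^m := tsum_congr (fun m => fiber_sum m)
    _ = 1 / (1 - x) + x - 1 + 2 * Real.log (1 - x) := (rhs_hasSum hx0 hx1).tsum_eq
end

section
/- For all z ≠ z̄ in (0,1), the sum of twist-two four-dimensional conformal blocks with free-field OPE coefficients resums to the connected free-scalar correlator: ∑_{ℓ = 0,2,4,…} 2·(Γ(ℓ+1)²/Γ(2ℓ+1)) · G_{2,ℓ}(z,z̄) = z z̄ / ((1−z)(1−z̄)) + z z̄. -/
open Real

/-- The twist-two four-dimensional conformal block
`G_{2,ℓ}(z,z̄) = (z z̄/(z−z̄))·(k_{ℓ+1}(z) − k_{ℓ+1}(z̄))`. -/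
noncomputable def G2block (ℓ : ℕ) (z zb : ℝ) : ℝ :=
  z * zb / (z - zb) * (kblock ((ℓ : ℝ) + 1) z - kblock ((ℓ : ℝ) + 1) zb)

noncomputable def F (k : ℕ) : ℝ := (Nat.factorial k : ℝ)

lemma F_pos (k : ℕ) : 0 < F k := by
  unfold F; exact_mod_cast Nat.factorial_pos k

lemma F_ne (k : ℕ) : F k ≠ 0 := (F_pos k).ne'

lemma F_succ (k : ℕ) : F (k+1) = (k+1) * F k := by
  rw [F, Nat.factorial_succ]; push_cast [F]; ring

lemma poch_nat_s7 (k m : ℕ) : poch ((k:ℝ)+1) m = F (k+m) / F k := by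
  induction m with
  | zero => simp [poch]; rw [eq_comm, div_eq_one_iff_eq (F_ne k)]
  | succ m ih =>
    have h : poch ((k:ℝ)+1) (m+1) = poch ((k:ℝ)+1) m * (((k:ℝ)+1) + m) := by
      simp [poch, ascPochhammer_succ_right, Polynomial.eval_mul]
    rw [h, ih, show k + (m+1) = (k+m)+1 by ring, F_succ]
    field_simp
    push_cast; ring

/-- coefficient of `x^(2n+1+m)` in `aₙ k_{2n+1}(x)` -/
noncomputable def cc (n m : ℕ) : ℝ :=
  2*(4*(n:ℝ)+1) * (F (2*n+m))^2 / (F (4*n+1+m) * F m)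

lemma cc_nonneg (n m : ℕ) : 0 ≤ cc n m := by
  unfold cc F
  positivity

/-- Lemma A: the block with OPE coefficient as a power series. -/
lemma block_series (n : ℕ) (x : ℝ) (hx : 0 < x) :
    2 * (F (2*n))^2 / F (4*n) * kblock (2*(n:ℝ)+1) x
      = ∑' m : ℕ, cc n m * x ^ (2*n+1+m) := by
  have hcast1 : (2*(n:ℝ)+1) = ((2*n : ℕ) : ℝ) + 1 := by push_cast; ring
  have hcast2 : 2*(2*(n:ℝ)+1) = ((4*n+1 : ℕ) : ℝ) + 1 := by push_cast; ring
  have hpow : x ^ (2*(n:ℝ)+1) = x ^ (2*n+1 : ℕ) := by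
    rw [show (2*(n:ℝ)+1) = ((2*n+1 : ℕ) : ℝ) by push_cast; ring, Real.rpow_natCast]
  unfold kblock F21
  rw [hpow]
  rw [eq_comm]
  rw [← tsum_mul_left, ← tsum_mul_left]
  apply tsum_congr
  intro m
  rw [hcast2, hcast1, poch_nat_s7, poch_nat_s7]
  have e1 : (2*n) + m = 2*n+m := rfl
  have e2 : (4*n+1) + m = 4*n+1+m := rfl
  rw [e1, e2]
  unfold cc
  rw [pow_add]
  have hF : (m.factorial : ℝ) = F m := rfl
  rw [hF]
  have h4 : F (4*n+1) = (4*(n:ℝ)+1) * F (4*n) := by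
    rw [show 4*n+1 = (4*n)+1 from rfl, F_succ]; push_cast; ring
  rw [h4]
  have h2n := F_ne (2*n); have h4n := F_ne (4*n); have hm := F_ne m
  have h41m := F_ne (4*n+1+m)
  field_simp

/-- The telescoping auxiliary `T(N,n)`. -/
noncomputable def TT (N n : ℕ) : ℝ :=
  if 2*n+1 ≤ N then F (N-2) * F (N-1) / (F (N+2*n-2) * F (N-2*n-1)) else 0

lemma coef_eq (N : ℕ) (hN : 2 ≤ N) (n : ℕ) :
    (if 2*n+1 ≤ N then cc n (N-2*n-1) else 0) = TT N n - TT N (n+1) := by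
  by_cases h : 2*n+1 ≤ N
  · rw [if_pos h]
    obtain ⟨m, rfl⟩ : ∃ m, N = 2*n+1+m := ⟨N-2*n-1, by omega⟩
    have hm : 2*n+1+m - 2*n-1 = m := by omega
    rw [hm]
    match m with
    | 0 =>
      obtain ⟨n', rfl⟩ : ∃ n', n = n'+1 := ⟨n-1, by omega⟩
      have h1 : TT (2*(n'+1)+1+0) (n'+1) = F (2*n'+1) * F (2*n'+2) / (F (4*n'+3) * F 0) := by
        unfold TT
        rw [if_pos (by omega),
          show 2*(n'+1)+1+0-2 = 2*n'+1 from by omega,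
          show 2*(n'+1)+1+0-1 = 2*n'+2 from by omega,
          show 2*(n'+1)+1+0+2*(n'+1)-2 = 4*n'+3 from by omega,
          show 2*(n'+1)+1+0-2*(n'+1)-1 = 0 from by omega]
      have h2 : TT (2*(n'+1)+1+0) (n'+1+1) = 0 := by
        unfold TT; rw [if_neg (by omega)]
      rw [h1, h2, sub_zero]
      unfold cc
      have e5 : F (4*(n'+1)+1+0) = (4*(n':ℝ)+5) * ((4*(n':ℝ)+4)) * F (4*n'+3) := by
        rw [show 4*(n'+1)+1+0 = (4*n'+4)+1 from by ring, F_succ,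
            show 4*n'+4 = (4*n'+3)+1 from by ring, F_succ]
        push_cast; ring
      have e6 : F (2*(n'+1)+0) = (2*(n':ℝ)+2) * F (2*n'+1) := by
        rw [show 2*(n'+1)+0 = (2*n'+1)+1 from by ring, F_succ]; push_cast; ring
      have e7 : F (2*n'+2) = (2*(n':ℝ)+2) * F (2*n'+1) := by
        rw [show 2*n'+2 = (2*n'+1)+1 from by ring, F_succ]; push_cast; ring
      rw [e5, e6, e7]
      have := F_ne (4*n'+3); have := F_ne (2*n'+1); have := F_ne 0
      field_simp
      push_cast
      ring
    | 1 =>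
      have h1 : TT (2*n+1+1) n = F (2*n) * F (2*n+1) / (F (4*n) * F 1) := by
        unfold TT
        rw [if_pos (by omega),
          show 2*n+1+1-2 = 2*n from by omega,
          show 2*n+1+1-1 = 2*n+1 from by omega,
          show 2*n+1+1+2*n-2 = 4*n from by omega,
          show 2*n+1+1-2*n-1 = 1 from by omega]
      have h2 : TT (2*n+1+1) (n+1) = 0 := by
        unfold TT; rw [if_neg (by omega)]
      rw [h1, h2, sub_zero]
      unfold cc
      have e5 : F (4*n+1+1) = (4*(n:ℝ)+2) * ((4*(n:ℝ)+1)) * F (4*n) := by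
        rw [show 4*n+1+1 = (4*n+1)+1 from by ring, F_succ,
            show 4*n+1 = (4*n)+1 from by ring, F_succ]
        push_cast; ring
      have e6 : F (2*n+1) = (2*(n:ℝ)+1) * F (2*n) := by
        rw [show 2*n+1 = (2*n)+1 from by ring, F_succ]; push_cast; ring
      rw [e5, e6]
      have := F_ne (4*n); have := F_ne (2*n); have := F_ne 1
      field_simp
      push_cast
      ring
    | (m'+2) =>
      have h1 : TT (2*n+1+(m'+2)) n
          = F (2*n+1+m') * F (2*n+2+m') / (F (4*n+1+m') * F (m'+2)) := by
        unfold TT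
        rw [if_pos (by omega),
          show 2*n+1+(m'+2)-2 = 2*n+1+m' from by omega,
          show 2*n+1+(m'+2)-1 = 2*n+2+m' from by omega,
          show 2*n+1+(m'+2)+2*n-2 = 4*n+1+m' from by omega,
          show 2*n+1+(m'+2)-2*n-1 = m'+2 from by omega]
      have h2 : TT (2*n+1+(m'+2)) (n+1)
          = F (2*n+1+m') * F (2*n+2+m') / (F (4*n+3+m') * F m') := by
        unfold TT
        rw [if_pos (by omega),
          show 2*n+1+(m'+2)-2 = 2*n+1+m' from by omega,
          show 2*n+1+(m'+2)-1 = 2*n+2+m' from by omega,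
          show 2*n+1+(m'+2)+2*(n+1)-2 = 4*n+3+m' from by omega,
          show 2*n+1+(m'+2)-2*(n+1)-1 = m' from by omega]
      rw [h1, h2]
      unfold cc
      have e5 : F (4*n+1+(m'+2)) = (4*(n:ℝ)+3+m') * ((4*(n:ℝ)+2+m')) * F (4*n+1+m') := by
        rw [show 4*n+1+(m'+2) = ((4*n+2+m')+1) from by ring, F_succ,
            show 4*n+2+m' = (4*n+1+m')+1 from by ring, F_succ]
        push_cast; ring
      have e6 : F (m'+2) = ((m':ℝ)+2) * ((m':ℝ)+1) * F m' := by
        rw [show m'+2 = (m'+1)+1 from rfl, F_succ, F_succ]; push_cast; ring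
      have e7 : F (2*n+(m'+2)) = (2*(n:ℝ)+2+m') * F (2*n+1+m') := by
        rw [show 2*n+(m'+2) = (2*n+1+m')+1 from by ring, F_succ]; push_cast; ring
      have e8 : F (2*n+2+m') = (2*(n:ℝ)+2+m') * F (2*n+1+m') := by
        rw [show 2*n+2+m' = (2*n+1+m')+1 from by ring, F_succ]; push_cast; ring
      have hx1 : F (4*n+3+m') = (4*(n:ℝ)+3+m') * ((4*(n:ℝ)+2+m')) * F (4*n+1+m') := by
        rw [show 4*n+3+m' = ((4*n+2+m')+1) from by ring, F_succ,
            show 4*n+2+m' = (4*n+1+m')+1 from by ring, F_succ]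
        push_cast; ring
      rw [e5, e6, e7, e8, hx1]
      have := F_ne (4*n+1+m'); have := F_ne (2*n+1+m'); have := F_ne m'
      have c1 : (4*(n:ℝ)+3+(m':ℝ)) ≠ 0 := by positivity
      have c2 : (4*(n:ℝ)+2+(m':ℝ)) ≠ 0 := by positivity
      have c3 : ((m':ℝ)+2) ≠ 0 := by positivity
      have c4 : ((m':ℝ)+1) ≠ 0 := by positivity
      field_simp
      push_cast
      ring
  · rw [if_neg h]
    have h2 : ¬ (2*(n+1)+1 ≤ N) := by omega
    unfold TT
    rw [if_neg h, if_neg h2, sub_zero]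

lemma innerSumOne (N : ℕ) (hN : 2 ≤ N) :
    ∑ n ∈ Finset.range N, (if 2*n+1 ≤ N then cc n (N-2*n-1) else 0) = 1 := by
  rw [Finset.sum_congr rfl (fun n _ => coef_eq N hN n), Finset.sum_range_sub']
  have h0 : TT N 0 = 1 := by
    unfold TT
    rw [if_pos (by omega)]
    rw [show N+2*0-2 = N-2 from by omega, show N-2*0-1 = N-1 from by omega]
    exact div_self (mul_ne_zero (F_ne _) (F_ne _))
  have hL : TT N N = 0 := by
    unfold TT; rw [if_neg (by omega)]
  rw [h0, hL, sub_zero]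

section Key

variable (x : ℝ)

/-- grouped coefficient function -/
noncomputable def gg (x : ℝ) (p : ℕ × ℕ) : ℝ :=
  (if 2*p.2+1 ≤ p.1 then cc p.2 (p.1-2*p.2-1) else 0) * x ^ p.1

/-- ungrouped double series -/
noncomputable def ff (x : ℝ) (p : ℕ × ℕ) : ℝ := cc p.1 p.2 * x ^ (2*p.1+1+p.2)

lemma gg_nonneg (hx : 0 ≤ x) : 0 ≤ gg x := by
  intro p
  unfold gg
  have := cc_nonneg p.2 (p.1-2*p.2-1)
  positivity

lemma ff_nonneg (hx : 0 ≤ x) : 0 ≤ ff x := by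
  intro p
  unfold ff
  have := cc_nonneg p.1 p.2
  positivity

lemma gg_slice_vanish (N n : ℕ) (hn : n ∉ Finset.range N) : gg x (N, n) = 0 := by
  unfold gg
  rw [if_neg (by simp at hn; omega), zero_mul]

/-- the inner sum of the grouped function -/
lemma gg_slice (N : ℕ) :
    ∑' n : ℕ, gg x (N, n) = if N = 0 then 0 else if N = 1 then 2*x else x^N := by
  rw [tsum_eq_sum (gg_slice_vanish x N)]
  match N with
  | 0 => simp
  | 1 =>
    simp only [Finset.range_one, Finset.sum_singleton]
    unfold gg cc
    norm_num [F]
  | (M+2) =>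
    have h1 : ∑ n ∈ Finset.range (M+2), gg x (M+2, n)
        = (∑ n ∈ Finset.range (M+2), if 2*n+1 ≤ M+2 then cc n (M+2-2*n-1) else 0) * x^(M+2) := by
      simp only [gg]
      rw [Finset.sum_mul]
    rw [h1, innerSumOne (M+2) (by omega), one_mul,
      if_neg (by omega : ¬ (M+2 = 0)), if_neg (by omega : ¬ (M+2 = 1))]

lemma summable_gg (hx0 : 0 ≤ x) (hx1 : x < 1) : Summable (gg x) := by
  rw [summable_prod_of_nonneg (gg_nonneg x hx0)]
  constructor
  · intro N
    exact summable_of_ne_finset_zero (gg_slice_vanish x N)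
  · have he : (fun N => ∑' n : ℕ, gg x (N, n))
        = fun N => x^N + (if N = 0 then -1 else if N = 1 then x else 0) := by
      funext N
      rw [gg_slice]
      match N with
      | 0 => norm_num
      | 1 => norm_num; ring
      | (M+2) =>
        rw [if_neg (by omega : ¬ (M+2 = 0)), if_neg (by omega : ¬ (M+2 = 1)),
          if_neg (by omega : ¬ (M+2 = 0)), if_neg (by omega : ¬ (M+2 = 1)), add_zero]
    rw [he]
    exact (summable_geometric_of_lt_one hx0 hx1).add
      (summable_of_ne_finset_zero (s := {0, 1}) (by
        intro N hN
        simp only [Finset.mem_insert, Finset.mem_singleton] at hN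
        push_neg at hN
        rw [if_neg hN.1, if_neg hN.2]))

/-- the injection regrouping the double sum -/
def ii : ℕ × ℕ → ℕ × ℕ := fun p => (2*p.1+1+p.2, p.1)

lemma ii_inj : Function.Injective ii := by
  intro p q h
  unfold ii at h
  obtain ⟨h1, h2⟩ := Prod.ext_iff.1 h
  have : p.2 = q.2 := by omega
  exact Prod.ext h2 this

lemma gg_comp_ii : gg x ∘ ii = ff x := by
  funext p
  unfold gg ff ii
  simp only [Function.comp_apply]
  rw [if_pos (by omega), show 2*p.1+1+p.2-2*p.1-1 = p.2 from by omega]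

lemma gg_support : Function.support (gg x) ⊆ Set.range ii := by
  intro p hp
  unfold gg at hp
  have h : 2*p.2+1 ≤ p.1 := by
    by_contra hc
    simp [if_neg hc] at hp
    exact hc hp.1
  exact ⟨(p.2, p.1-2*p.2-1), by unfold ii; ext <;> simp <;> omega⟩

lemma summable_ff (hx0 : 0 ≤ x) (hx1 : x < 1) : Summable (ff x) := by
  rw [← gg_comp_ii]
  exact (summable_gg x hx0 hx1).comp_injective ii_inj

lemma key_summable (hx0 : 0 < x) (hx1 : x < 1) :
    Summable (fun n : ℕ => 2 * (F (2*n))^2 / F (4*n) * kblock (2*(n:ℝ)+1) x) := by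
  have h := (summable_prod_of_nonneg (ff_nonneg x hx0.le)).1 (summable_ff x hx0.le hx1)
  have he : (fun n : ℕ => 2 * (F (2*n))^2 / F (4*n) * kblock (2*(n:ℝ)+1) x)
      = fun n => ∑' m : ℕ, ff x (n, m) := by
    funext n
    rw [block_series n x hx0]
    rfl
  rw [he]
  exact h.2

lemma key_tsum (hx0 : 0 < x) (hx1 : x < 1) :
    ∑' n : ℕ, 2 * (F (2*n))^2 / F (4*n) * kblock (2*(n:ℝ)+1) x = x/(1-x) + x := by
  have hff := summable_ff x hx0.le hx1
  have hgg := summable_gg x hx0.le hx1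
  have step1 : ∑' n : ℕ, 2 * (F (2*n))^2 / F (4*n) * kblock (2*(n:ℝ)+1) x
      = ∑' (n : ℕ) (m : ℕ), ff x (n, m) := by
    apply tsum_congr
    intro n
    rw [block_series n x hx0]
    rfl
  have step2 : ∑' (n : ℕ) (m : ℕ), ff x (n, m) = ∑' p : ℕ × ℕ, ff x p :=
    (Summable.tsum_prod' hff ((summable_prod_of_nonneg (ff_nonneg x hx0.le)).1 hff).1).symm
  have step3 : ∑' p : ℕ × ℕ, ff x p = ∑' p : ℕ × ℕ, gg x p := by
    rw [← gg_comp_ii]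
    exact Function.Injective.tsum_eq ii_inj (gg_support x)
  have step4 : ∑' p : ℕ × ℕ, gg x p = ∑' (N : ℕ) (n : ℕ), gg x (N, n) :=
    Summable.tsum_prod' hgg ((summable_prod_of_nonneg (gg_nonneg x hx0.le)).1 hgg).1
  have step5 : ∑' (N : ℕ) (n : ℕ), gg x (N, n)
      = ∑' N : ℕ, (x^N + (if N = 0 then -1 else if N = 1 then x else 0)) := by
    apply tsum_congr
    intro N
    rw [gg_slice]
    match N with
    | 0 => norm_num
    | 1 => norm_num; ring
    | (M+2) =>
      rw [if_neg (by omega : ¬ (M+2 = 0)), if_neg (by omega : ¬ (M+2 = 1)),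
        if_neg (by omega : ¬ (M+2 = 0)), if_neg (by omega : ¬ (M+2 = 1)), add_zero]
  have hd : Summable (fun N : ℕ => (if N = 0 then (-1:ℝ) else if N = 1 then x else 0)) :=
    summable_of_ne_finset_zero (s := {0, 1}) (by
      intro N hN
      simp only [Finset.mem_insert, Finset.mem_singleton] at hN
      push_neg at hN
      rw [if_neg hN.1, if_neg hN.2])
  have step6 : ∑' N : ℕ, (x^N + (if N = 0 then (-1:ℝ) else if N = 1 then x else 0))
      = (1-x)⁻¹ + (x - 1) := by
    rw [Summable.tsum_add (summable_geometric_of_lt_one hx0.le hx1) hd,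
        tsum_geometric_of_lt_one hx0.le hx1]
    congr 1
    rw [tsum_eq_sum (s := {0, 1}) (by
      intro N hN
      simp only [Finset.mem_insert, Finset.mem_singleton] at hN
      push_neg at hN
      rw [if_neg hN.1, if_neg hN.2])]
    norm_num
    ring
  rw [step1, step2, step3, step4, step5, step6]
  have : (1:ℝ) - x ≠ 0 := by intro hc; nlinarith
  field_simp
  ring

end Key

/-- for z ≠ z̄ in (0,1), the sum of twist-two 4d conformal blocks
with free-field OPE coefficients over even spins ℓ = 0,2,4,… (here ℓ = 2n)
resums to the connected free-scalar correlator: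
`∑ 2·(Γ(ℓ+1)²/Γ(2ℓ+1))·G_{2,ℓ}(z,z̄) = z z̄/((1−z)(1−z̄)) + z z̄`. -/
theorem sum_twist_two_blocks_free (z zb : ℝ) (hz : z ∈ Set.Ioo (0 : ℝ) 1)
    (hzb : zb ∈ Set.Ioo (0 : ℝ) 1) (hne : z ≠ zb) :
    ∑' n : ℕ,
        2 * ((Real.Gamma (2 * (n : ℝ) + 1)) ^ 2 / Real.Gamma (2 * (2 * (n : ℝ)) + 1))
          * G2block (2 * n) z zb
      = z * zb / ((1 - z) * (1 - zb)) + z * zb := by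
  obtain ⟨hz0, hz1⟩ := hz
  obtain ⟨hb0, hb1⟩ := hzb
  have hA : ∀ n : ℕ, 2 * ((Real.Gamma (2*(n:ℝ)+1))^2 / Real.Gamma (2*(2*(n:ℝ))+1))
      = 2 * (F (2*n))^2 / F (4*n) := by
    intro n
    rw [show 2*(n:ℝ)+1 = ((2*n:ℕ):ℝ)+1 from by push_cast; ring,
        show 2*(2*(n:ℝ))+1 = ((4*n:ℕ):ℝ)+1 from by push_cast; ring,
        Real.Gamma_nat_eq_factorial, Real.Gamma_nat_eq_factorial]
    rw [mul_div_assoc]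
    rfl
  have hsummand : ∀ n : ℕ, (2 * ((Real.Gamma (2*(n:ℝ)+1))^2 / Real.Gamma (2*(2*(n:ℝ))+1)))
      * G2block (2*n) z zb
      = z*zb/(z-zb) * ((2 * (F (2*n))^2 / F (4*n)) * kblock (2*(n:ℝ)+1) z
          - (2 * (F (2*n))^2 / F (4*n)) * kblock (2*(n:ℝ)+1) zb) := by
    intro n
    rw [hA n]
    unfold G2block
    rw [show ((2*n : ℕ):ℝ) + 1 = 2*(n:ℝ)+1 from by push_cast; ring]
    ring
  rw [tsum_congr hsummand, tsum_mul_left,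
     Summable.tsum_sub (key_summable z hz0 hz1) (key_summable zb hb0 hb1),
     key_tsum z hz0 hz1, key_tsum zb hb0 hb1]
  have h1 : (1:ℝ) - z ≠ 0 := by intro h; nlinarith
  have h2 : (1:ℝ) - zb ≠ 0 := by intro h; nlinarith
  have h3 : z - zb ≠ 0 := sub_ne_zero.2 hne
  field_simp
  ring
end
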